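/- arXiv:1405.2881 — 2 statements merged into one kernel-verified Lean document; each statement's English description precedes it below -/
import Mathlib

section
/- Let d ≥ 1, t ≥ 1 and let S be a finite set of a ≥ 1 points in ℝ^d. Consider partitions of S produced by recursive binary tree splitting: start from the single cell S, and repeatedly replace one current cell C by the two nonempty cells {x ∈ C : x^{(j)} < z} and {x ∈ C : x^{(j)} ≥ z} for some coordinate j ∈ {1, …, d} and threshold z ∈ ℝ (each split must separate the points of C into two nonempty groups), until at most t cells are obtained. Then the number of distinct partitions of S obtainable in this way is at most (d·a)^t. -/
/-- Partitions of a finite set `S` of points of `ℝ^d` obtainable by recursive binary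
axis-aligned splitting: start from the single cell `S`, and repeatedly replace a current
cell `C` by the two nonempty cells `{x ∈ C : x⁽ʲ⁾ < z}` and `{x ∈ C : x⁽ʲ⁾ ≥ z}`. -/
inductive TreePartition {d : ℕ} (S : Finset (Fin d → ℝ)) :
    Finset (Finset (Fin d → ℝ)) → Prop
  | root : TreePartition S {S}
  | split (P : Finset (Finset (Fin d → ℝ))) (C : Finset (Fin d → ℝ)) (j : Fin d) (z : ℝ)
      (hP : TreePartition S P) (hC : C ∈ P)
      (hL : (C.filter fun x => x j < z).Nonempty)
      (hR : (C.filter fun x => ¬ x j < z).Nonempty) :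
      TreePartition S
        (insert (C.filter fun x => x j < z)
          (insert (C.filter fun x => ¬ x j < z) (P.erase C)))

open Classical in
/-- Perform the split encoded by coordinate `j` and data point `x`: split the (unique)
cell containing `x` at threshold `x j`, if this is a valid split; otherwise do nothing. -/
noncomputable def splitFun {d : ℕ} (S : Finset (Fin d → ℝ))
    (P : Finset (Finset (Fin d → ℝ))) (j : Fin d) (x : Fin d → ℝ) :
    Finset (Finset (Fin d → ℝ)) :=
  if h : ∃ C, C ∈ P ∧ C ⊆ S ∧ x ∈ C ∧ (C.filter fun y => y j < x j).Nonempty ∧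
      (C.filter fun y => ¬ y j < x j).Nonempty then
    insert (h.choose.filter fun y => y j < x j)
      (insert (h.choose.filter fun y => ¬ y j < x j) (P.erase h.choose))
  else P

/-- Partitions reachable in at most `k` splits (as images of `splitFun`). -/
noncomputable def Gamma {d : ℕ} (S : Finset (Fin d → ℝ)) :
    ℕ → Finset (Finset (Finset (Fin d → ℝ)))
  | 0 => {{S}}
  | k + 1 => ((Gamma S k) ×ˢ ((Finset.univ : Finset (Fin d)) ×ˢ S)).image
      fun p => splitFun S p.1 p.2.1 p.2.2

lemma card_Gamma {d : ℕ} (S : Finset (Fin d → ℝ)) (k : ℕ) :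
    (Gamma S k).card ≤ (d * S.card) ^ k := by
  induction k with
  | zero => simp [Gamma]
  | succ k ih =>
      calc (Gamma S (k + 1)).card
          ≤ ((Gamma S k) ×ˢ ((Finset.univ : Finset (Fin d)) ×ˢ S)).card :=
            Finset.card_image_le
        _ = (Gamma S k).card * (d * S.card) := by
            simp [Finset.card_product, mul_assoc]
        _ ≤ (d * S.card) ^ k * (d * S.card) := by
            exact Nat.mul_le_mul_right _ ih
        _ = (d * S.card) ^ (k + 1) := by ring

/-- Structural invariant of tree partitions. -/
lemma treePartition_inv {d : ℕ} {S : Finset (Fin d → ℝ)} (hS : S.Nonempty)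
    {P : Finset (Finset (Fin d → ℝ))} (hP : TreePartition S P) :
    (∀ C ∈ P, C ⊆ S ∧ C.Nonempty) ∧
      ∀ C ∈ P, ∀ C' ∈ P, C ≠ C' → Disjoint C C' := by
  induction hP with
  | root =>
      refine ⟨?_, ?_⟩
      · intro C hC; rw [Finset.mem_singleton] at hC; subst hC; exact ⟨subset_rfl, hS⟩
      · intro C hC C' hC' hne
        rw [Finset.mem_singleton] at hC hC'; exact absurd (hC.trans hC'.symm) hne
  | split P C j z hP hC hL hR ih =>
      obtain ⟨ih1, ih2⟩ := ih
      have hCS : C ⊆ S := (ih1 C hC).1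
      have hmem : ∀ D, D ∈ insert (C.filter fun x => x j < z)
          (insert (C.filter fun x => ¬ x j < z) (P.erase C)) →
          D = (C.filter fun x => x j < z) ∨ D = (C.filter fun x => ¬ x j < z) ∨
          (D ∈ P ∧ D ≠ C) := by
        intro D hD
        simp only [Finset.mem_insert, Finset.mem_erase] at hD
        tauto
      constructor
      · intro D hD
        rcases hmem D hD with h | h | ⟨h, _⟩
        · subst h; exact ⟨(Finset.filter_subset _ _).trans hCS, hL⟩
        · subst h; exact ⟨(Finset.filter_subset _ _).trans hCS, hR⟩
        · exact ih1 D h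
      · intro D hD D' hD' hne
        have key : ∀ E, (E = (C.filter fun x => x j < z) ∨
            E = (C.filter fun x => ¬ x j < z)) → E ⊆ C := by
          rintro E (rfl | rfl) <;> exact Finset.filter_subset _ _
        rcases hmem D hD with h | h | ⟨h, hDC⟩ <;>
          rcases hmem D' hD' with h' | h' | ⟨h', hD'C⟩
        · exact absurd (h.trans h'.symm) hne
        · subst h; subst h'
          exact Finset.disjoint_left.mpr fun x hx hx' =>
            (Finset.mem_filter.mp hx').2 (Finset.mem_filter.mp hx).2
        · have : Disjoint C D' := ih2 C hC D' h' (Ne.symm hD'C)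
          exact Finset.disjoint_of_subset_left (key D (Or.inl h)) this
        · subst h; subst h'
          exact Finset.disjoint_left.mpr fun x hx hx' =>
            (Finset.mem_filter.mp hx).2 (Finset.mem_filter.mp hx').2
        · exact absurd (h.trans h'.symm) hne
        · have : Disjoint C D' := ih2 C hC D' h' (Ne.symm hD'C)
          exact Finset.disjoint_of_subset_left (key D (Or.inr h)) this
        · have : Disjoint D C := ih2 D h C hC hDC
          exact (Finset.disjoint_of_subset_right (key D' (Or.inl h')) this)
        · have : Disjoint D C := ih2 D h C hC hDC
          exact (Finset.disjoint_of_subset_right (key D' (Or.inr h')) this)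
        · exact ih2 D h D' h' hne

/-- Splitting increases the number of cells by exactly one. -/
lemma treePartition_card_split {d : ℕ} {S : Finset (Fin d → ℝ)} (hS : S.Nonempty)
    {P : Finset (Finset (Fin d → ℝ))} (hP : TreePartition S P)
    {C : Finset (Fin d → ℝ)} (hC : C ∈ P) (j : Fin d) (z : ℝ)
    (hL : (C.filter fun x => x j < z).Nonempty)
    (hR : (C.filter fun x => ¬ x j < z).Nonempty) :
    (insert (C.filter fun x => x j < z)
        (insert (C.filter fun x => ¬ x j < z) (P.erase C))).card = P.card + 1 := by
  obtain ⟨ih1, ih2⟩ := treePartition_inv hS hP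
  set L := C.filter fun x => x j < z with hLdef
  set R := C.filter fun x => ¬ x j < z with hRdef
  have hLR : L ≠ R := by
    intro h
    obtain ⟨x, hx⟩ := hL
    have hx' : x ∈ R := h ▸ hx
    rw [hLdef, Finset.mem_filter] at hx
    rw [hRdef, Finset.mem_filter] at hx'
    exact hx'.2 hx.2
  have hsub : ∀ E, (E = L ∨ E = R) → E ∉ P.erase C := by
    rintro E hE hmem
    rw [Finset.mem_erase] at hmem
    have hEC : E ⊆ C := by rcases hE with rfl | rfl <;> exact Finset.filter_subset _ _
    have hdisj : Disjoint E C := ih2 E hmem.2 C hC hmem.1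
    have hEne : E.Nonempty := by rcases hE with rfl | rfl; exacts [hL, hR]
    obtain ⟨x, hx⟩ := hEne
    exact (Finset.disjoint_left.mp hdisj hx) (hEC hx)
  have h1 : L ∉ insert R (P.erase C) := by
    rw [Finset.mem_insert]
    rintro (h | h)
    · exact hLR h
    · exact hsub L (Or.inl rfl) h
  have h2 : R ∉ P.erase C := hsub R (Or.inr rfl)
  rw [Finset.card_insert_of_notMem h1, Finset.card_insert_of_notMem h2,
    Finset.card_erase_of_mem hC]
  have : 1 ≤ P.card := Finset.card_pos.mpr ⟨C, hC⟩
  omega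

/-- `splitFun` does nothing at a global minimizer. -/
lemma splitFun_eq_self {d : ℕ} (S : Finset (Fin d → ℝ))
    (P : Finset (Finset (Fin d → ℝ))) (j : Fin d) {x : Fin d → ℝ}
    (hmin : ∀ y ∈ S, x j ≤ y j) : splitFun S P j x = P := by
  rw [splitFun, dif_neg]
  rintro ⟨C, _, hCS, _, ⟨y, hy⟩, _⟩
  rw [Finset.mem_filter] at hy
  exact absurd (hmin y (hCS hy.1)) (not_le.mpr hy.2)

/-- Any valid split can be realized by `splitFun` with a data point of `S`. -/
lemma splitFun_realizes {d : ℕ} {S : Finset (Fin d → ℝ)}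
    {P : Finset (Finset (Fin d → ℝ))} {C : Finset (Fin d → ℝ)} (j : Fin d) (z : ℝ)
    (hdisj : ∀ D ∈ P, ∀ D' ∈ P, D ≠ D' → Disjoint D D')
    (hCS : C ⊆ S) (hC : C ∈ P)
    (hL : (C.filter fun x => x j < z).Nonempty)
    (hR : (C.filter fun x => ¬ x j < z).Nonempty) :
    ∃ x ∈ S, splitFun S P j x =
      insert (C.filter fun x => x j < z)
        (insert (C.filter fun x => ¬ x j < z) (P.erase C)) := by
  obtain ⟨x, hxR, hxmin⟩ := Finset.exists_min_image _ (fun y => y j) hR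
  rw [Finset.mem_filter] at hxR
  obtain ⟨hxC, hxz⟩ := hxR
  -- the filters at threshold `x j` coincide with those at threshold `z`
  have hfil : ∀ y ∈ C, (y j < x j ↔ y j < z) := by
    intro y hyC
    constructor
    · intro hyx
      by_contra hyz
      have : y ∈ C.filter fun w => ¬ w j < z := Finset.mem_filter.mpr ⟨hyC, hyz⟩
      exact absurd (hxmin y this) (not_le.mpr hyx)
    · intro hyz
      exact lt_of_lt_of_le hyz (not_lt.mp hxz)
  have hLeq : (C.filter fun y => y j < x j) = C.filter fun y => y j < z :=
    Finset.filter_congr fun y hy => by simpa using hfil y hy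
  have hReq : (C.filter fun y => ¬ y j < x j) = C.filter fun y => ¬ y j < z :=
    Finset.filter_congr fun y hy => by simpa using not_congr (hfil y hy)
  refine ⟨x, hCS hxC, ?_⟩
  have h : ∃ D, D ∈ P ∧ D ⊆ S ∧ x ∈ D ∧ (D.filter fun y => y j < x j).Nonempty ∧
      (D.filter fun y => ¬ y j < x j).Nonempty :=
    ⟨C, hC, hCS, hxC, hLeq ▸ hL, hReq ▸ hR⟩
  rw [splitFun, dif_pos h]
  obtain ⟨hD1, _, hD3, _, _⟩ := h.choose_spec
  have hDC : h.choose = C := by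
    by_contra hne
    exact Finset.disjoint_left.mp (hdisj _ hD1 C hC hne) hD3 hxC
  rw [hDC, hLeq, hReq]

lemma gamma_mono_step {d : ℕ} {S : Finset (Fin d → ℝ)} (hd : 1 ≤ d) (hS : S.Nonempty)
    (k : ℕ) : Gamma S k ⊆ Gamma S (k + 1) := by
  intro P hP
  obtain ⟨x, hxS, hxmin⟩ := Finset.exists_min_image S (fun y => y ⟨0, hd⟩) hS
  rw [Gamma, Finset.mem_image]
  exact ⟨(P, ⟨0, hd⟩, x), by simp [hP, hxS], splitFun_eq_self S P _ hxmin⟩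

lemma gamma_mono {d : ℕ} {S : Finset (Fin d → ℝ)} (hd : 1 ≤ d) (hS : S.Nonempty)
    {m n : ℕ} (hmn : m ≤ n) : Gamma S m ⊆ Gamma S n := by
  induction n with
  | zero => rw [Nat.le_zero.mp hmn]
  | succ n ih =>
      rcases Nat.lt_or_ge m (n + 1) with h | h
      · exact (ih (Nat.lt_succ_iff.mp h)).trans (gamma_mono_step hd hS n)
      · rw [Nat.le_antisymm hmn h]

/-- Every tree partition with `c` cells is reachable in `c - 1` splits. -/
lemma treePartition_mem_gamma {d : ℕ} {S : Finset (Fin d → ℝ)}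
    (hS : S.Nonempty) {P : Finset (Finset (Fin d → ℝ))} (hP : TreePartition S P) :
    P ∈ Gamma S (P.card - 1) := by
  induction hP with
  | root => simp [Gamma]
  | split P C j z hP hC hL hR ih =>
      have hcard := treePartition_card_split hS hP hC j z hL hR
      rw [hcard]
      have h1 : 1 ≤ P.card := Finset.card_pos.mpr ⟨C, hC⟩
      have heq : P.card + 1 - 1 = (P.card - 1) + 1 := Nat.succ_sub h1 ▸ rfl
      rw [heq]
      simp only [Gamma, Finset.mem_image]
      obtain ⟨inv1, inv2⟩ := treePartition_inv hS hP
      obtain ⟨x, hxS, hx⟩ := splitFun_realizes j z inv2 (inv1 C hC).1 hC hL hR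
      exact ⟨(P, j, x), by simp [ih, hxS], hx⟩

/-- Partitioning-number bound: the number of distinct partitions of a set of `a` points
of `ℝ^d` produced by recursive binary tree splitting into at most `t` cells is at most
`(d·a)^t`. -/
theorem treePartition_count_le (d a t : ℕ) (hd : 1 ≤ d) (ha : 1 ≤ a) (ht : 1 ≤ t)
    (S : Finset (Fin d → ℝ)) (hS : S.card = a) :
    {P : Finset (Finset (Fin d → ℝ)) | TreePartition S P ∧ P.card ≤ t}.encard ≤
      (((d * a) ^ t : ℕ) : ℕ∞) := by
  have hSne : S.Nonempty := Finset.card_pos.mp (hS ▸ ha)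
  have hsub : {P : Finset (Finset (Fin d → ℝ)) | TreePartition S P ∧ P.card ≤ t} ⊆
      ↑(Gamma S (t - 1)) := by
    rintro P ⟨hP, hPt⟩
    exact gamma_mono hd hSne (by omega : P.card - 1 ≤ t - 1)
      (treePartition_mem_gamma hSne hP)
  calc {P : Finset (Finset (Fin d → ℝ)) | TreePartition S P ∧ P.card ≤ t}.encard
      ≤ (↑(Gamma S (t - 1)) : Set _).encard := Set.encard_le_encard hsub
    _ = ((Gamma S (t - 1)).card : ℕ∞) := Set.encard_coe_eq_coe_finsetCard _
    _ ≤ (((d * a) ^ (t - 1) : ℕ) : ℕ∞) := by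
        exact_mod_cast (hS ▸ card_Gamma S (t - 1))
    _ ≤ (((d * a) ^ t : ℕ) : ℕ∞) := by
        have : (d * a) ^ (t - 1) ≤ (d * a) ^ t :=
          Nat.pow_le_pow_right (by positivity) (by omega)
        exact_mod_cast this
end

section
/- Let σ > 0 and c ≥ 0, and for each n let ε₁, …, εₙ be independent, identically distributed centered Gaussian random variables with variance σ². Then lim_{n → ∞} E[ (c + max_{1 ≤ i ≤ n} |εᵢ|)² · 1_{ max_{1 ≤ i ≤ n} εᵢ ≥ σ√2 (log n)² } ] = 0. -/
open MeasureTheory ProbabilityTheory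

section Aux
open Real

lemma gaussInt {σ : ℝ} (hσ : 0 < σ) :
    Integrable (fun x : ℝ => Real.exp (x ^ 2 / (4 * σ ^ 2)))
      (gaussianReal 0 ⟨σ ^ 2, sq_nonneg σ⟩) := by
  have hs : (0:ℝ) < σ ^ 2 := by positivity
  have hv : (⟨σ ^ 2, sq_nonneg σ⟩ : NNReal) ≠ 0 := by
    intro h
    have := congrArg (fun x : NNReal => (x:ℝ)) h
    exact hs.ne' this
  rw [gaussianReal_of_var_ne_zero _ hv]
  have hmeas : Measurable (fun x : ℝ => (gaussianPDFReal 0 ⟨σ ^ 2, sq_nonneg σ⟩ x).toNNReal) :=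
    (measurable_gaussianPDFReal _ _).real_toNNReal
  have heq : volume.withDensity (gaussianPDF 0 ⟨σ ^ 2, sq_nonneg σ⟩)
      = volume.withDensity (fun x => ((gaussianPDFReal 0 ⟨σ ^ 2, sq_nonneg σ⟩ x).toNNReal : ENNReal)) := rfl
  rw [heq, integrable_withDensity_iff_integrable_smul hmeas]
  have key : (fun x : ℝ => (gaussianPDFReal 0 ⟨σ ^ 2, sq_nonneg σ⟩ x).toNNReal • Real.exp (x ^ 2 / (4 * σ ^ 2)))
      = fun x : ℝ => (Real.sqrt (2 * Real.pi * σ ^ 2))⁻¹ * Real.exp (-(1/(4 * σ ^ 2)) * x ^ 2) := by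
    funext x
    have hnn : 0 ≤ gaussianPDFReal 0 ⟨σ ^ 2, sq_nonneg σ⟩ x := gaussianPDFReal_nonneg _ _ _
    rw [NNReal.smul_def, Real.coe_toNNReal _ hnn]
    simp only [gaussianPDFReal, NNReal.coe_mk, sub_zero, smul_eq_mul, mul_assoc, ← Real.exp_add]
    congr 2
    change -x ^ 2 / (2 * σ ^ 2) + x ^ 2 / (4 * σ ^ 2) = _
    field_simp
    ring
  rw [key]
  exact ((integrable_exp_neg_mul_sq (by positivity : (0:ℝ) < 1/(4*σ^2)))).const_mul _

set_option maxHeartbeats 1000000 in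
lemma pointwise_bound {n : ℕ} (hn : 1 ≤ n) {σ c t : ℝ} (hσ : 0 < σ) (hc : 0 ≤ c) (ht : 0 ≤ t)
    (f : Fin n → ℝ) (h : t ≤ ⨆ i, f i) :
    (c + ⨆ i, |f i|) ^ 2 ≤
      Real.exp (-t ^ 2 / (8 * σ ^ 2)) * (2 * c ^ 2 + 16 * σ ^ 2) *
        ∑ j, Real.exp ((f j) ^ 2 / (4 * σ ^ 2)) := by
  haveI : Nonempty (Fin n) := Fin.pos_iff_nonempty.mp hn
  have hs : (0:ℝ) < σ ^ 2 := by positivity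
  obtain ⟨i₀, hi₀⟩ := Finite.exists_max f
  obtain ⟨i₁, hi₁⟩ := Finite.exists_max (fun i => |f i|)
  have hta : t ≤ f i₀ := h.trans (ciSup_le hi₀)
  have hsup : (⨆ i, |f i|) = |f i₁| :=
    le_antisymm (ciSup_le hi₁) (le_ciSup (f := fun i => |f i|) (Set.Finite.bddAbove (Set.finite_range _)) i₁)
  rw [hsup]
  set a := f i₀ with ha
  set b := f i₁ with hb
  set S := ∑ j, Real.exp ((f j) ^ 2 / (4 * σ ^ 2)) with hS
  have hSa : Real.exp (a ^ 2 / (4 * σ ^ 2)) ≤ S :=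
    Finset.single_le_sum (f := fun j => Real.exp ((f j) ^ 2 / (4 * σ ^ 2))) (fun j _ => (Real.exp_pos _).le) (Finset.mem_univ i₀)
  have hSb : Real.exp (b ^ 2 / (4 * σ ^ 2)) ≤ S :=
    Finset.single_le_sum (f := fun j => Real.exp ((f j) ^ 2 / (4 * σ ^ 2))) (fun j _ => (Real.exp_pos _).le) (Finset.mem_univ i₁)
  have hS0 : 0 < S := lt_of_lt_of_le (Real.exp_pos _) hSa
  have hta2 : t ^ 2 ≤ a ^ 2 := by nlinarith
  have h1 : (c + |b|) ^ 2 ≤ 2 * c ^ 2 + 2 * b ^ 2 := by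
    have := abs_nonneg b
    have := sq_abs b
    nlinarith [sq_nonneg (c - |b|)]
  have h2 : b ^ 2 ≤ 8 * σ ^ 2 * Real.exp (b ^ 2 / (8 * σ ^ 2)) := by
    have hu : b ^ 2 / (8 * σ ^ 2) ≤ Real.exp (b ^ 2 / (8 * σ ^ 2)) :=
      (Real.add_one_le_exp _).trans' (by linarith [le_refl (b^2/(8*σ^2))]) |>.trans_eq rfl
    calc b ^ 2 = 8 * σ ^ 2 * (b ^ 2 / (8 * σ ^ 2)) := by field_simp
    _ ≤ 8 * σ ^ 2 * Real.exp (b ^ 2 / (8 * σ ^ 2)) := by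
        exact mul_le_mul_of_nonneg_left hu (by positivity)
  have h3 : (1:ℝ) ≤ Real.exp (-t ^ 2 / (8 * σ ^ 2)) * Real.exp (a ^ 2 / (8 * σ ^ 2)) := by
    rw [← Real.exp_add]
    have : (0:ℝ) ≤ -t ^ 2 / (8 * σ ^ 2) + a ^ 2 / (8 * σ ^ 2) := by
      rw [← add_div]
      exact div_nonneg (by linarith) (by positivity)
    exact Real.exp_zero.symm.trans_le (Real.exp_le_exp.mpr this)
  have h4 : Real.exp (a ^ 2 / (8 * σ ^ 2)) ≤ S := by
    refine le_trans (Real.exp_le_exp.mpr ?_) hSa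
    apply div_le_div_of_nonneg_left (sq_nonneg a) (by positivity)
    linarith
  have h5 : Real.exp (b ^ 2 / (8 * σ ^ 2)) * Real.exp (a ^ 2 / (8 * σ ^ 2)) ≤ S := by
    rw [← Real.exp_add]
    rcases le_total (b ^ 2) (a ^ 2) with hab | hab
    · refine le_trans (Real.exp_le_exp.mpr ?_) hSa
      rw [← add_div, div_le_div_iff₀ (by positivity) (by positivity)]
      nlinarith
    · refine le_trans (Real.exp_le_exp.mpr ?_) hSb
      rw [← add_div, div_le_div_iff₀ (by positivity) (by positivity)]
      nlinarith
  set E := Real.exp (-t ^ 2 / (8 * σ ^ 2)) with hE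
  have hE0 : 0 < E := Real.exp_pos _
  have heb : 0 < Real.exp (b ^ 2 / (8 * σ ^ 2)) := Real.exp_pos _
  have hea : 0 < Real.exp (a ^ 2 / (8 * σ ^ 2)) := Real.exp_pos _
  calc (c + |b|) ^ 2 ≤ (2 * c ^ 2 + 2 * b ^ 2) * (E * Real.exp (a ^ 2 / (8 * σ ^ 2))) := by
        nlinarith [mul_le_mul_of_nonneg_left h3 (show (0:ℝ) ≤ 2 * c ^ 2 + 2 * b ^ 2 by positivity), h1]
    _ ≤ 2 * c ^ 2 * (E * S) + 16 * σ ^ 2 * Real.exp (b ^ 2 / (8 * σ ^ 2)) * (E * Real.exp (a ^ 2 / (8 * σ ^ 2))) := by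
        nlinarith [mul_le_mul_of_nonneg_left h4 (show (0:ℝ) ≤ 2 * c ^ 2 * E by positivity),
          mul_le_mul_of_nonneg_right h2 (show (0:ℝ) ≤ E * Real.exp (a ^ 2 / (8 * σ ^ 2)) by positivity)]
    _ ≤ 2 * c ^ 2 * (E * S) + 16 * σ ^ 2 * (E * S) := by
        nlinarith [mul_le_mul_of_nonneg_left h5 (show (0:ℝ) ≤ 16 * σ ^ 2 * E by positivity)]
    _ = E * (2 * c ^ 2 + 16 * σ ^ 2) * S := by ring

end Aux

/-- Let `σ > 0`, `c ≥ 0`, and for each `n` let `ε n 1, …, ε n n` be i.i.d. centered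
Gaussian random variables with variance `σ²`.  Then
`E[(c + max_i |ε n i|)² · 1_{max_i ε n i ≥ σ√2 (log n)²}] → 0` as `n → ∞`. -/
theorem expected_overshoot_tendsto_zero {Ω : Type*} [MeasureSpace Ω]
    [IsProbabilityMeasure (ℙ : Measure Ω)]
    (σ : ℝ) (hσ : 0 < σ) (c : ℝ) (hc : 0 ≤ c)
    (ε : (n : ℕ) → Fin n → Ω → ℝ)
    (hindep : ∀ n, iIndepFun (ε n) ℙ)
    (hdist : ∀ n (i : Fin n), Measure.map (ε n i) ℙ = gaussianReal 0 ⟨σ ^ 2, sq_nonneg σ⟩) :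
    Filter.Tendsto
      (fun n : ℕ => ∫ ω,
        (if σ * Real.sqrt 2 * (Real.log n) ^ 2 ≤ ⨆ i, ε n i ω
          then (c + ⨆ i, |ε n i ω|) ^ 2 else 0) ∂ℙ)
      Filter.atTop (nhds 0) := by
  have haem : ∀ n (i : Fin n), AEMeasurable (ε n i) ℙ := by
    intro n i
    by_contra hmeas
    have h := hdist n i
    rw [Measure.map_of_not_aemeasurable hmeas] at h
    have h1 : (gaussianReal 0 ⟨σ ^ 2, sq_nonneg σ⟩) Set.univ = 0 := by rw [← h]; simp
    exact one_ne_zero ((@measure_univ _ _ _ (instIsProbabilityMeasureGaussianReal 0 ⟨σ ^ 2, sq_nonneg σ⟩)).symm.trans h1)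
  have hgm : AEStronglyMeasurable (fun x : ℝ => Real.exp (x ^ 2 / (4 * σ ^ 2)))
      (gaussianReal 0 ⟨σ ^ 2, sq_nonneg σ⟩) :=
    (Real.continuous_exp.comp (by continuity)).aestronglyMeasurable
  have hint : ∀ n (j : Fin n), Integrable (fun ω => Real.exp ((ε n j ω) ^ 2 / (4 * σ ^ 2))) ℙ := by
    intro n j
    have := (integrable_map_measure (by rw [hdist n j]; exact hgm) (haem n j)).mp
      (by rw [hdist n j]; exact gaussInt hσ)
    simpa [Function.comp_def] using this
  set M : ℝ := ∫ x, Real.exp (x ^ 2 / (4 * σ ^ 2)) ∂(gaussianReal 0 ⟨σ ^ 2, sq_nonneg σ⟩) with hMdef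
  have hM0 : 0 ≤ M := integral_nonneg fun x => (Real.exp_pos _).le
  have hval : ∀ n (j : Fin n), ∫ ω, Real.exp ((ε n j ω) ^ 2 / (4 * σ ^ 2)) ∂ℙ = M := by
    intro n j
    rw [hMdef, ← hdist n j, integral_map (haem n j) (by rw [hdist n j]; exact hgm)]
  set B : ℕ → ℝ := fun n =>
    Real.exp (-(σ * Real.sqrt 2 * (Real.log n) ^ 2) ^ 2 / (8 * σ ^ 2)) *
      (2 * c ^ 2 + 16 * σ ^ 2) * ((n : ℝ) * M) with hBdef
  -- upper bound
  have hub : ∀ n : ℕ, 1 ≤ n →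
      (∫ ω, (if σ * Real.sqrt 2 * (Real.log n) ^ 2 ≤ ⨆ i, ε n i ω
          then (c + ⨆ i, |ε n i ω|) ^ 2 else 0) ∂ℙ) ≤ B n := by
    intro n hn
    set t := σ * Real.sqrt 2 * (Real.log n) ^ 2 with htdef
    have ht : 0 ≤ t := by
      rw [htdef]
      positivity
    have hG : Integrable (fun ω => Real.exp (-t ^ 2 / (8 * σ ^ 2)) * (2 * c ^ 2 + 16 * σ ^ 2) *
        ∑ j, Real.exp ((ε n j ω) ^ 2 / (4 * σ ^ 2))) ℙ :=
      ((integrable_finset_sum _ (fun j _ => hint n j)).const_mul _)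
    have step1 : (∫ ω, (if t ≤ ⨆ i, ε n i ω
          then (c + ⨆ i, |ε n i ω|) ^ 2 else 0) ∂ℙ)
        ≤ ∫ ω, Real.exp (-t ^ 2 / (8 * σ ^ 2)) * (2 * c ^ 2 + 16 * σ ^ 2) *
            ∑ j, Real.exp ((ε n j ω) ^ 2 / (4 * σ ^ 2)) ∂ℙ := by
      refine integral_mono_of_nonneg (Filter.Eventually.of_forall fun ω => ?_) hG
        (Filter.Eventually.of_forall fun ω => ?_)
      · dsimp only
        split_ifs <;> positivity
      · dsimp only
        split_ifs with hcond
        · exact pointwise_bound hn hσ hc ht _ hcond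
        · positivity
    refine step1.trans_eq ?_
    rw [integral_const_mul, integral_finset_sum _ (fun j _ => hint n j)]
    simp only [hval n]
    rw [Finset.sum_const, Finset.card_univ, Fintype.card_fin, nsmul_eq_mul, hBdef]
  -- B tends to zero
  have hBeq : ∀ n : ℕ, B n = ((2 * c ^ 2 + 16 * σ ^ 2) * M) *
      ((n : ℝ) * Real.exp (-(Real.log n) ^ 4 / 4)) := by
    intro n
    have h2 : (Real.sqrt 2) ^ 2 = 2 := Real.sq_sqrt (by norm_num)
    have he : -(σ * Real.sqrt 2 * (Real.log n) ^ 2) ^ 2 / (8 * σ ^ 2) = -(Real.log n) ^ 4 / 4 := by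
      rw [mul_pow, mul_pow, h2]
      have hs : σ ^ 2 ≠ 0 := by positivity
      field_simp
      ring
    rw [hBdef]
    dsimp only
    rw [he]
    ring
  have hne : Filter.Tendsto (fun n : ℕ => (n : ℝ) * Real.exp (-(Real.log n) ^ 4 / 4))
      Filter.atTop (nhds 0) := by
    apply tendsto_of_tendsto_of_tendsto_of_le_of_le' tendsto_const_nhds
      tendsto_one_div_atTop_nhds_zero_nat
    · exact Filter.Eventually.of_forall fun n => by positivity
    · filter_upwards [Filter.eventually_ge_atTop 1,
        Filter.eventually_ge_atTop (Nat.ceil (Real.exp 2))] with n h1 h2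
      have hn0 : (0:ℝ) < n := by exact_mod_cast h1
      have hexp2 : Real.exp 2 ≤ (n : ℝ) := le_trans (Nat.le_ceil _) (by exact_mod_cast h2)
      have hl : 2 ≤ Real.log n := by
        calc (2:ℝ) = Real.log (Real.exp 2) := (Real.log_exp 2).symm
        _ ≤ Real.log n := Real.log_le_log (Real.exp_pos 2) hexp2
      have hL4 : 2 * Real.log n ≤ (Real.log n) ^ 4 / 4 := by
        nlinarith [mul_le_mul_of_nonneg_left (pow_le_pow_left₀ (by norm_num : (0:ℝ) ≤ 2) hl 3)
          (by linarith : (0:ℝ) ≤ Real.log n)]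
      have hee : Real.exp (-(Real.log n) ^ 4 / 4) ≤ Real.exp (-(2 * Real.log n)) :=
        Real.exp_le_exp.mpr (by linarith)
      have hexpeq : Real.exp (-(2 * Real.log n)) = 1 / (n : ℝ) ^ 2 := by
        rw [Real.exp_neg, two_mul, Real.exp_add, Real.exp_log hn0]
        rw [one_div, sq]
      calc (n : ℝ) * Real.exp (-(Real.log n) ^ 4 / 4) ≤ (n : ℝ) * (1 / (n : ℝ) ^ 2) :=
            mul_le_mul_of_nonneg_left (hee.trans_eq hexpeq) hn0.le
        _ = 1 / (n : ℝ) := by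
            field_simp
  have hB : Filter.Tendsto B Filter.atTop (nhds 0) := by
    have := hne.const_mul ((2 * c ^ 2 + 16 * σ ^ 2) * M)
    rw [mul_zero] at this
    exact Filter.Tendsto.congr (fun n => (hBeq n).symm) this
  -- squeeze
  apply tendsto_of_tendsto_of_tendsto_of_le_of_le' tendsto_const_nhds hB
  · exact Filter.Eventually.of_forall fun n =>
      integral_nonneg fun ω => by dsimp only; split_ifs <;> positivity
  · filter_upwards [Filter.eventually_ge_atTop 1] with n hn
    exact hub n hn
end
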